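/- Let (K, δ) be a differential field of characteristic zero, a ∈ K, and (L, δ_L) a differential extension containing a nonzero u with δ_L(u) = a·u. Suppose an algebraic differential extension (M, δ_M) of (L, δ_L) contains z with δ_M(z) = u + a·z. Then there exists w ∈ L with δ_L(w) = 1. -/

import Mathlib

open Polynomial Finset

/-- Let `(L, δ_L)` be a differential extension of `(K, δ)` containing a nonzero `u`
with `δ_L(u) = a·u`, `a ∈ K`. If an algebraic differential extension `(M, δ_M)` of `(L, δ_L)`
contains `z` with `δ_M(z) = u + a·z`, then there exists `w ∈ L` with `δ_L(w) = 1`. -/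
theorem stmt11 {K L M : Type*} [Field K] [CharZero K] [Field L] [Algebra K L]
    [Field M] [Algebra L M] [Algebra.IsAlgebraic L M]
    (δ : K → K)
    (hadd : ∀ a b : K, δ (a + b) = δ a + δ b)
    (hmul : ∀ a b : K, δ (a * b) = δ a * b + a * δ b)
    (δL : L → L)
    (hLadd : ∀ x y : L, δL (x + y) = δL x + δL y)
    (hLmul : ∀ x y : L, δL (x * y) = δL x * y + x * δL y)
    (hLcomp : ∀ a : K, δL (algebraMap K L a) = algebraMap K L (δ a))
    (δM : M → M)
    (hMadd : ∀ x y : M, δM (x + y) = δM x + δM y)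
    (hMmul : ∀ x y : M, δM (x * y) = δM x * y + x * δM y)
    (hMcomp : ∀ x : L, δM (algebraMap L M x) = algebraMap L M (δL x))
    (a : K) (u : L) (hu : u ≠ 0) (hueq : δL u = algebraMap K L a * u)
    (z : M)
    (hz : δM z = algebraMap L M u + algebraMap L M (algebraMap K L a) * z) :
    ∃ w : L, δL w = 1 := by
  haveI : CharZero L := charZero_of_injective_algebraMap (algebraMap K L).injective
  -- basic derivation facts
  have hL0 : δL 0 = 0 := by
    have h := hLadd 0 0; simp only [add_zero] at h; exact (left_eq_add.mp h)
  have hL1 : δL 1 = 0 := by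
    have h := hLmul 1 1; simp only [one_mul, mul_one] at h; exact (left_eq_add.mp h)
  have hLneg : ∀ x : L, δL (-x) = - δL x := by
    intro x
    have h := hLadd x (-x); rw [add_neg_cancel, hL0] at h
    linear_combination -h
  have hLnat : ∀ k : ℕ, δL (k : L) = 0 := by
    intro k; induction k with
    | zero => simpa using hL0
    | succ m ih => push_cast; rw [hLadd, ih, hL1, add_zero]
  have hM0 : δM 0 = 0 := by
    have h := hMadd 0 0; simp only [add_zero] at h; exact (left_eq_add.mp h)
  have hM1 : δM 1 = 0 := by
    have h := hMmul 1 1; simp only [one_mul, mul_one] at h; exact (left_eq_add.mp h)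
  -- the element v = z / u has δM v = 1
  set α : M := algebraMap L M (algebraMap K L a) with hα
  set uM : M := algebraMap L M u with huMdef
  have huM0 : uM ≠ 0 := by
    simpa [huMdef] using (map_ne_zero (algebraMap L M)).mpr hu
  have hδuM : δM uM = α * uM := by
    rw [huMdef, hMcomp, hueq, map_mul]
  have hinvuM : δM uM⁻¹ = -(α * uM⁻¹) := by
    have h := hMmul uM uM⁻¹
    rw [mul_inv_cancel₀ huM0, hM1, hδuM] at h
    have h2 : α * uM * uM⁻¹ = α := by field_simp
    rw [h2] at h
    have h3 : uM * δM uM⁻¹ = -α := by linear_combination -h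
    calc δM uM⁻¹ = uM⁻¹ * (uM * δM uM⁻¹) := by
          rw [← mul_assoc, inv_mul_cancel₀ huM0, one_mul]
      _ = uM⁻¹ * (-α) := by rw [h3]
      _ = -(α * uM⁻¹) := by ring
  set v : M := z * uM⁻¹ with hv
  have hδv : δM v = 1 := by
    have h := hMmul z uM⁻¹
    rw [hz, hinvuM] at h
    rw [hv, h]
    field_simp
    ring
  -- δM on powers of v
  have hpow : ∀ i : ℕ, δM (v ^ i) = (i : M) * v ^ (i - 1) := by
    intro i; induction i with
    | zero => simpa using hM1
    | succ m ih =>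
      rw [pow_succ, hMmul, hδv, ih, mul_one]
      cases m with
      | zero => simp
      | succ k =>
        simp only [Nat.add_sub_cancel]
        push_cast
        rw [pow_succ]
        ring
  -- minimal polynomial of v
  have hvi : IsIntegral L v := (Algebra.IsAlgebraic.isAlgebraic v).isIntegral
  set p : L[X] := minpoly L v with hp
  set n : ℕ := p.natDegree with hn
  have hnpos : 0 < n := minpoly.natDegree_pos hvi
  have hmonic : p.Monic := minpoly.monic hvi
  have hpne : p ≠ 0 := minpoly.ne_zero hvi
  have haev : (aeval v) p = 0 := minpoly.aeval L v
  -- the differentiated relation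
  have hexp : (0 : M) = ∑ i ∈ range (n + 1), algebraMap L M (p.coeff i) * v ^ i := by
    rw [← haev, aeval_eq_sum_range]
    exact Finset.sum_congr rfl fun i _ => Algebra.smul_def _ _
  set D : M →+ M := AddMonoidHom.mk' δM hMadd with hD
  have key : (0 : M) = ∑ i ∈ range (n + 1),
      (algebraMap L M (δL (p.coeff i)) * v ^ i
        + algebraMap L M (p.coeff i) * ((i : M) * v ^ (i - 1))) := by
    have h1 : δM (∑ i ∈ range (n + 1), algebraMap L M (p.coeff i) * v ^ i)
        = ∑ i ∈ range (n + 1), δM (algebraMap L M (p.coeff i) * v ^ i) :=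
      map_sum D _ _
    calc (0 : M) = δM 0 := hM0.symm
      _ = δM (∑ i ∈ range (n + 1), algebraMap L M (p.coeff i) * v ^ i) := by rw [← hexp]
      _ = ∑ i ∈ range (n + 1), δM (algebraMap L M (p.coeff i) * v ^ i) := h1
      _ = _ := Finset.sum_congr rfl fun i _ => by rw [hMmul, hMcomp, hpow]
  -- reorganize the sum
  have key2 : (0 : M) = ∑ i ∈ range n,
      algebraMap L M (δL (p.coeff i) + ((i : L) + 1) * p.coeff (i + 1)) * v ^ i := by
    rw [key, Finset.sum_add_distrib]
    have hA : ∑ i ∈ range (n + 1), algebraMap L M (δL (p.coeff i)) * v ^ i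
        = ∑ i ∈ range n, algebraMap L M (δL (p.coeff i)) * v ^ i := by
      rw [Finset.sum_range_succ]
      have hcn : p.coeff n = 1 := hmonic.coeff_natDegree
      rw [hcn, hL1, map_zero, zero_mul, add_zero]
    have hB : ∑ i ∈ range (n + 1), algebraMap L M (p.coeff i) * ((i : M) * v ^ (i - 1))
        = ∑ i ∈ range n, algebraMap L M (p.coeff (i + 1)) * (((i : M) + 1) * v ^ i) := by
      rw [Finset.sum_range_succ']
      simp [Nat.add_sub_cancel]
    rw [hA, hB, ← Finset.sum_add_distrib]
    refine Finset.sum_congr rfl fun i _ => ?_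
    push_cast [map_add, map_mul]
    ring
  -- the witness polynomial
  set q : L[X] := ∑ i ∈ range n, C (δL (p.coeff i) + ((i : L) + 1) * p.coeff (i + 1)) * X ^ i
    with hq
  have haevq : (aeval v) q = 0 := by
    rw [hq, map_sum]
    calc ∑ i ∈ range n, (aeval v) (C (δL (p.coeff i) + ((i : L) + 1) * p.coeff (i + 1)) * X ^ i)
        = ∑ i ∈ range n, algebraMap L M (δL (p.coeff i) + ((i : L) + 1) * p.coeff (i + 1)) * v ^ i :=
          Finset.sum_congr rfl fun i _ => by simp
      _ = 0 := key2.symm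
  -- q has degree < deg p, hence q = 0
  have hdegq : q.degree < p.degree := by
    rw [degree_eq_natDegree hpne, ← hn]
    refine lt_of_le_of_lt (degree_sum_le _ _) ?_
    rw [Finset.sup_lt_iff (by exact_mod_cast WithBot.bot_lt_coe n)]
    intro i hi
    refine lt_of_le_of_lt (degree_C_mul_X_pow_le i _) ?_
    exact_mod_cast Finset.mem_range.mp hi
  have hq0 : q = 0 := by
    by_contra h
    exact absurd (minpoly.degree_le_of_ne_zero L v h haevq) (not_le.mpr hdegq)
  -- extract the coefficient at n - 1
  have hcoeff : δL (p.coeff (n - 1)) + ((((n : ℕ) - 1 : ℕ) : L) + 1) * p.coeff ((n - 1) + 1) = 0 := by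
    have h := congrArg (fun r => Polynomial.coeff r (n - 1)) hq0
    simp only [hq, finset_sum_coeff, coeff_C_mul, coeff_X_pow, coeff_zero, mul_ite, mul_one,
      mul_zero, Finset.sum_ite_eq (range n), Finset.mem_range] at h
    rw [if_pos (by omega : n - 1 < n)] at h
    exact h
  rw [Nat.sub_add_cancel hnpos, show p.coeff n = 1 from hmonic.coeff_natDegree, mul_one] at hcoeff
  have hcast : ((((n : ℕ) - 1 : ℕ) : L) + 1) = (n : L) := by
    have h := congrArg (fun k : ℕ => (k : L)) (Nat.sub_add_cancel hnpos)
    push_cast at h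
    exact h
  rw [hcast] at hcoeff
  -- hcoeff : δL (p.coeff (n-1)) + n = 0
  have hnL : (n : L) ≠ 0 := Nat.cast_ne_zero.mpr hnpos.ne'
  have hinvn : δL ((n : L)⁻¹) = 0 := by
    have h := hLmul (n : L) ((n : L)⁻¹)
    rw [mul_inv_cancel₀ hnL, hL1, hLnat] at h
    have h2 : (n : L) * δL ((n : L)⁻¹) = 0 := by linear_combination -h
    rcases mul_eq_zero.mp h2 with h3 | h3
    · exact absurd h3 hnL
    · exact h3
  refine ⟨-(p.coeff (n - 1) * (n : L)⁻¹), ?_⟩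
  rw [hLneg, hLmul, hinvn, mul_zero, add_zero]
  have hδc : δL (p.coeff (n - 1)) = -(n : L) := by linear_combination hcoeff
  rw [hδc]
  field_simp
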